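/- Let A ∈ ℂ^{m×n}, b ∈ ℂ^m, μ > 0, β > 0, and let τ, γ > 0 satisfy τ·λ_max + γ < 2, where λ_max is the largest eigenvalue of A*A. Let (r̃, x̃) be a solution of min{‖x‖₁ + (1/(2μ))‖r‖₂² : A x + r = b} and set ỹ = r̃/μ. Consider the iteration: r^{k+1} = (μβ/(1+μβ))·(y^k/β − (A x^k − b)), g^k = A*(A x^k + r^{k+1} − b − y^k/β), x^{k+1} = Shrink(x^k − τ g^k, τ/β), y^{k+1} = y^k − γβ(A x^{k+1} + r^{k+1} − b). For u = (x; y) define the weighted squared norm ‖u‖_G² = (β/τ)‖x‖₂² + (1/(βγ))‖y‖₂², and set δ = 1 − τλ_max/(2−γ) > 0 and η = min(δ², δ(2−γ)/(γ(1+δ))) > 0. Then for every k, with u^k = (x^k; y^k) and ũ = (x̃; ỹ): ‖u^k − ũ‖_G² − ‖u^{k+1} − ũ‖_G² ≥ η·‖u^k − u^{k+1}‖_G². -/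

import Mathlib

open Filter Topology Matrix Finset

noncomputable def l1 {ι : Type*} [Fintype ι] (v : ι → ℂ) : ℝ := ∑ i, ‖v i‖

noncomputable def l2sq {ι : Type*} [Fintype ι] (v : ι → ℂ) : ℝ := ∑ i, (‖v i‖)^2

noncomputable def l2 {ι : Type*} [Fintype ι] (v : ι → ℂ) : ℝ := Real.sqrt (l2sq v)

noncomputable def linf {ι : Type*} [Fintype ι] (v : ι → ℂ) : ℝ := ⨆ i, ‖v i‖

noncomputable def csign (w : ℂ) : ℂ := if w = 0 then 0 else w / ((‖w‖ : ℝ) : ℂ)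

noncomputable def shrink {ι : Type*} [Fintype ι] (z : ι → ℂ) (ν : ℝ) : ι → ℂ :=
  fun i => ((max (‖z i‖ - ν) 0 : ℝ) : ℂ) * csign (z i)

noncomputable def reInner {ι : Type*} [Fintype ι] (y v : ι → ℂ) : ℝ :=
  (∑ i, (starRingEnd ℂ) (y i) * v i).re

noncomputable def projBall {ι : Type*} [Fintype ι] (t : ℝ) (v : ι → ℂ) : ι → ℂ :=
  if l2 v ≤ t then v else (t / l2 v) • v

noncomputable def projBox {ι : Type*} [Fintype ι] (v : ι → ℂ) : ι → ℂ :=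
  fun i => if ‖v i‖ ≤ 1 then v i else v i / ((‖v i‖ : ℝ) : ℂ)

noncomputable def lmax {m n : ℕ} (A : Matrix (Fin m) (Fin n) ℂ) : ℝ :=
  ⨆ i, (Matrix.isHermitian_conjTranspose_mul_self A).eigenvalues i

section API
variable {ι : Type*} [Fintype ι]

lemma reInner_eq_sum (y v : ι → ℂ) : reInner y v = ∑ i, ((starRingEnd ℂ) (y i) * v i).re := by
  simp [reInner, Complex.re_sum]

lemma reInner_eq_dot (y v : ι → ℂ) : reInner y v = (dotProduct (star y) v).re := rfl

lemma star_mul_self_complex (a : ℂ) : star a * a = (((‖a‖)^2 : ℝ) : ℂ) := by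
  rw [mul_comm, show star a = (starRingEnd ℂ) a from rfl, Complex.mul_conj, Complex.normSq_eq_norm_sq]

lemma reInner_self (v : ι → ℂ) : reInner v v = l2sq v := by
  rw [reInner_eq_sum]; unfold l2sq
  refine Finset.sum_congr rfl fun i _ => ?_
  rw [show (starRingEnd ℂ) (v i) = star (v i) from rfl, star_mul_self_complex, Complex.ofReal_re]

lemma reInner_comm (a b : ι → ℂ) : reInner a b = reInner b a := by
  rw [reInner_eq_sum, reInner_eq_sum]
  refine Finset.sum_congr rfl fun i _ => ?_
  simp [Complex.mul_re]; ring

lemma reInner_add_left (a b c : ι → ℂ) : reInner (a + b) c = reInner a c + reInner b c := by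
  simp [reInner_eq_sum, add_mul, ← Finset.sum_add_distrib]

lemma reInner_add_right (a b c : ι → ℂ) : reInner a (b + c) = reInner a b + reInner a c := by
  simp [reInner_eq_sum, mul_add, ← Finset.sum_add_distrib]

lemma reInner_smul_left (t : ℝ) (a b : ι → ℂ) : reInner (t • a) b = t * reInner a b := by
  simp [reInner_eq_sum, Complex.real_smul, Finset.mul_sum, mul_assoc, Complex.re_ofReal_mul]

lemma reInner_smul_right (t : ℝ) (a b : ι → ℂ) : reInner a (t • b) = t * reInner a b := by
  rw [reInner_comm, reInner_smul_left, reInner_comm]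

lemma reInner_neg_left (a b : ι → ℂ) : reInner (-a) b = - reInner a b := by
  simp [reInner_eq_sum, ← Finset.sum_neg_distrib]

lemma reInner_neg_right (a b : ι → ℂ) : reInner a (-b) = - reInner a b := by
  rw [reInner_comm, reInner_neg_left, reInner_comm]

lemma reInner_sub_left (a b c : ι → ℂ) : reInner (a - b) c = reInner a c - reInner b c := by
  rw [sub_eq_add_neg, reInner_add_left, reInner_neg_left]; ring

lemma reInner_sub_right (a b c : ι → ℂ) : reInner a (b - c) = reInner a b - reInner a c := by
  rw [reInner_comm, reInner_sub_left, reInner_comm a b, reInner_comm a c]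

lemma l2sq_add (a b : ι → ℂ) : l2sq (a + b) = l2sq a + 2 * reInner a b + l2sq b := by
  rw [← reInner_self, ← reInner_self, ← reInner_self, reInner_add_left, reInner_add_right,
    reInner_add_right, reInner_comm b a]; ring

lemma l2sq_nonneg (a : ι → ℂ) : 0 ≤ l2sq a :=
  Finset.sum_nonneg fun _ _ => sq_nonneg _

lemma l2sq_neg (a : ι → ℂ) : l2sq (-a) = l2sq a := by
  unfold l2sq; simp

lemma l2sq_smul (t : ℝ) (a : ι → ℂ) : l2sq (t • a) = t^2 * l2sq a := by
  rw [← reInner_self, reInner_smul_left, reInner_smul_right, reInner_self]; ring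

lemma reInner_adj {m n : ℕ} (A : Matrix (Fin m) (Fin n) ℂ) (w : Fin m → ℂ) (u : Fin n → ℂ) :
    reInner (Aᴴ.mulVec w) u = reInner w (A.mulVec u) := by
  rw [reInner_eq_dot, reInner_eq_dot, Matrix.star_mulVec, conjTranspose_conjTranspose,
    dotProduct_mulVec]

lemma reInner_le_sqrt (a b : ι → ℂ) :
    reInner a b ≤ Real.sqrt (l2sq a) * Real.sqrt (l2sq b) := by
  rw [reInner_eq_sum]
  have h1 : ∑ i, ((starRingEnd ℂ) (a i) * b i).re ≤ ∑ i, ‖a i‖ * ‖b i‖ := by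
    refine Finset.sum_le_sum fun i _ => ?_
    calc ((starRingEnd ℂ) (a i) * b i).re ≤ ‖(starRingEnd ℂ) (a i) * b i‖ :=
          Complex.re_le_norm _
      _ = ‖a i‖ * ‖b i‖ := by
          rw [norm_mul, Complex.norm_conj]
  exact h1.trans (Real.sum_mul_le_sqrt_mul_sqrt _ _ _)

lemma neg_sqrt_le_reInner (a b : ι → ℂ) :
    - (Real.sqrt (l2sq a) * Real.sqrt (l2sq b)) ≤ reInner a b := by
  have := reInner_le_sqrt (-a) b
  rw [reInner_neg_left, l2sq_neg] at this
  linarith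

end API

section EIG

lemma eig_le_lmax {m n : ℕ} (A : Matrix (Fin m) (Fin n) ℂ) (i : Fin n) :
    (Matrix.isHermitian_conjTranspose_mul_self A).eigenvalues i ≤ lmax A :=
  le_ciSup (Set.Finite.bddAbove (Set.finite_range _)) i

lemma l2sq_eq_re_dot {ι : Type*} [Fintype ι] (v : ι → ℂ) :
    l2sq v = (dotProduct (star v) v).re := by
  unfold l2sq dotProduct
  rw [Complex.re_sum]
  refine Finset.sum_congr rfl fun i _ => ?_
  simp only [Pi.star_apply]
  rw [star_mul_self_complex, Complex.ofReal_re]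

lemma lmax_nonneg {m n : ℕ} (A : Matrix (Fin m) (Fin n) ℂ) : 0 ≤ lmax A := by
  rcases Nat.eq_zero_or_pos n with hn | hn
  · subst hn
    unfold lmax
    rw [Real.iSup_of_isEmpty]
  · have i0 : Fin n := ⟨0, hn⟩
    have h1 : 0 ≤ (Matrix.isHermitian_conjTranspose_mul_self A).eigenvalues i0 := by
      open scoped ComplexOrder in
      exact (Matrix.posSemidef_conjTranspose_mul_self A).eigenvalues_nonneg i0
    exact h1.trans (eig_le_lmax A i0)

lemma l2sq_mulVec_le {m n : ℕ} (A : Matrix (Fin m) (Fin n) ℂ) (e : Fin n → ℂ) :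
    l2sq (A.mulVec e) ≤ lmax A * l2sq e := by
  classical
  set hH := Matrix.isHermitian_conjTranspose_mul_self A with hHdef
  set U : Matrix (Fin n) (Fin n) ℂ := (hH.eigenvectorUnitary : Matrix (Fin n) (Fin n) ℂ) with hU
  set w : Fin n → ℂ := (star U).mulVec e with hw
  have hsw : star e ᵥ* U = star w := by
    rw [hw, Matrix.star_mulVec, star_eq_conjTranspose, conjTranspose_conjTranspose]
  have key1 : l2sq (A.mulVec e) = (dotProduct (star e) ((Aᴴ * A).mulVec e)).re := by
    rw [l2sq_eq_re_dot, Matrix.star_mulVec, ← Matrix.mulVec_mulVec,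
      dotProduct_mulVec (star e)]
  have hspec := hH.spectral_theorem
  set D : Matrix (Fin n) (Fin n) ℂ := diagonal (RCLike.ofReal ∘ hH.eigenvalues) with hD
  have key2 : (dotProduct (star e) ((Aᴴ * A).mulVec e)).re
      = ∑ i, hH.eigenvalues i * (‖w i‖)^2 := by
    conv_lhs => rw [hspec, Unitary.conjStarAlgAut_apply, ← Matrix.mulVec_mulVec, ← Matrix.mulVec_mulVec,
      dotProduct_mulVec]
    rw [hsw, ← hU, ← hw]
    unfold dotProduct
    rw [Complex.re_sum]
    refine Finset.sum_congr rfl fun i _ => ?_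
    rw [Matrix.mulVec_diagonal]
    have h1 : (RCLike.ofReal ∘ hH.eigenvalues) i = ((hH.eigenvalues i : ℝ) : ℂ) := rfl
    rw [h1]
    have h2 : star w i * (((hH.eigenvalues i : ℝ) : ℂ) * w i)
        = ((hH.eigenvalues i : ℝ) : ℂ) * (star (w i) * w i) := by
      simp only [Pi.star_apply]; ring
    rw [h2, star_mul_self_complex, ← Complex.ofReal_mul, Complex.ofReal_re]
  have key3 : l2sq w = l2sq e := by
    rw [l2sq_eq_re_dot, l2sq_eq_re_dot]
    congr 1
    rw [hw, Matrix.star_mulVec, star_eq_conjTranspose, conjTranspose_conjTranspose,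
      ← dotProduct_mulVec, Matrix.mulVec_mulVec]
    have hUU : U * Uᴴ = 1 := by
      rw [← star_eq_conjTranspose]
      exact (Matrix.mem_unitaryGroup_iff).mp hH.eigenvectorUnitary.2
    rw [hUU, Matrix.one_mulVec]
  rw [key1, key2, ← key3]
  have : ∑ i, hH.eigenvalues i * (‖w i‖)^2 ≤ ∑ i, lmax A * (‖w i‖)^2 :=
    Finset.sum_le_sum fun i _ => mul_le_mul_of_nonneg_right (eig_le_lmax A i) (sq_nonneg _)
  refine this.trans ?_
  rw [← Finset.mul_sum]
  exact le_of_eq rfl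

end EIG

section SHRINK

lemma shrink_scalar (z w : ℂ) (ν : ℝ) (hν : 0 ≤ ν) :
    ((starRingEnd ℂ) (z - ((max (‖z‖ - ν) 0 : ℝ) : ℂ) * csign z) *
      (w - ((max (‖z‖ - ν) 0 : ℝ) : ℂ) * csign z)).re
      ≤ ν * ‖w‖ - ν * max (‖z‖ - ν) 0 := by
  by_cases hz : z = 0
  · have h0 : ‖(0:ℂ)‖ - ν ≤ 0 := by simp [hν]
    simp only [hz, csign, if_pos rfl, max_eq_right h0]
    simp [mul_nonneg hν (norm_nonneg w)]
  · have ha : 0 < ‖z‖ := norm_pos_iff.mpr hz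
    have hcs : csign z = z / (‖z‖ : ℂ) := by simp [csign, hz]
    have hrw : ∀ u : ℂ, ((starRingEnd ℂ) u * w).re ≤ ‖u‖ * ‖w‖ := by
      intro u
      calc ((starRingEnd ℂ) u * w).re ≤ ‖(starRingEnd ℂ) u * w‖ := Complex.re_le_norm _
        _ = ‖u‖ * ‖w‖ := by rw [norm_mul, Complex.norm_conj]
    by_cases hle : ‖z‖ ≤ ν
    · have hmax : max (‖z‖ - ν) 0 = 0 := max_eq_right (by linarith)
      rw [hmax]
      simp only [Complex.ofReal_zero, zero_mul, sub_zero, mul_zero]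
      have := hrw z
      have h2 : ‖z‖ * ‖w‖ ≤ ν * ‖w‖ :=
        mul_le_mul_of_nonneg_right hle (norm_nonneg _)
      linarith
    · push_neg at hle
      have hmax : max (‖z‖ - ν) 0 = ‖z‖ - ν := max_eq_left (by linarith)
      rw [hmax, hcs]
      have hz_ne : (‖z‖ : ℂ) ≠ 0 := by
        simpa using ha.ne'
      have key : z - ((‖z‖ - ν : ℝ) : ℂ) * (z / (‖z‖ : ℂ))
          = (ν : ℂ) * (z / (‖z‖ : ℂ)) := by
        field_simp
        push_cast; ring
      rw [key]
      have expand : ((starRingEnd ℂ) ((ν:ℂ) * (z / (‖z‖ : ℂ))) *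
          (w - ((‖z‖ - ν : ℝ) : ℂ) * (z / (‖z‖ : ℂ)))).re
          = (ν / ‖z‖) * ((starRingEnd ℂ) z * w).re - ν * (‖z‖ - ν) := by
        have : (starRingEnd ℂ) ((ν:ℂ) * (z / (‖z‖ : ℂ)))
            = (ν:ℂ) / (‖z‖ : ℂ) * (starRingEnd ℂ) z := by
          simp [_root_.map_mul, map_div₀]
          ring
        rw [this, mul_sub]
        rw [Complex.sub_re]
        congr 1
        · have : (ν:ℂ) / (‖z‖ : ℂ) * (starRingEnd ℂ) z * w
              = ((ν / ‖z‖ : ℝ) : ℂ) * ((starRingEnd ℂ) z * w) := by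
            push_cast; ring
          rw [this, Complex.re_ofReal_mul]
        · have : (ν:ℂ) / (‖z‖ : ℂ) * (starRingEnd ℂ) z *
              (((‖z‖ - ν : ℝ) : ℂ) * (z / (‖z‖ : ℂ)))
              = ((ν * (‖z‖ - ν) : ℝ) : ℂ) * ((starRingEnd ℂ) z * z) /
                (((‖z‖)^2 : ℝ) : ℂ) := by
            push_cast; ring
          rw [this]
          have hcz : (starRingEnd ℂ) z * z = (((‖z‖)^2 : ℝ) : ℂ) := by
            rw [mul_comm, Complex.mul_conj, Complex.normSq_eq_norm_sq]
          rw [hcz]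
          have : (((ν * (‖z‖ - ν) : ℝ)) : ℂ) * (((‖z‖)^2 : ℝ):ℂ) /
              (((‖z‖)^2 : ℝ) : ℂ) = ((ν * (‖z‖ - ν) : ℝ) : ℂ) := by
            rw [mul_div_assoc, div_self (by exact_mod_cast pow_ne_zero 2 ha.ne'), mul_one]
          rw [this, Complex.ofReal_re]
      rw [expand]
      have hb : (ν / ‖z‖) * ((starRingEnd ℂ) z * w).re ≤ ν * ‖w‖ := by
        calc (ν / ‖z‖) * ((starRingEnd ℂ) z * w).re
            ≤ (ν / ‖z‖) * (‖z‖ * ‖w‖) :=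
              mul_le_mul_of_nonneg_left (hrw z) (by positivity)
          _ = ν * ‖w‖ := by field_simp
      linarith

lemma abs_shrink {ι : Type*} [Fintype ι] (z : ι → ℂ) (ν : ℝ) (hν : 0 ≤ ν) (i : ι) :
    ‖shrink z ν i‖ = max (‖z i‖ - ν) 0 := by
  unfold shrink
  by_cases hz : z i = 0
  · rw [hz]
    have h0 : ‖(0:ℂ)‖ - ν ≤ 0 := by simpa using hν
    simp [csign, max_eq_right h0]
    exact hν
  · have ha : 0 < ‖z i‖ := norm_pos_iff.mpr hz
    have hcs : ‖csign (z i)‖ = 1 := by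
      simp [csign, hz, map_div₀, div_self ha.ne']
    rw [norm_mul, hcs, mul_one, Complex.norm_real, Real.norm_eq_abs, abs_of_nonneg (le_max_right _ _)]

lemma shrink_subgrad {ι : Type*} [Fintype ι] (z x' : ι → ℂ) (ν : ℝ) (hν : 0 ≤ ν) :
    reInner (z - shrink z ν) (x' - shrink z ν) ≤ ν * l1 x' - ν * l1 (shrink z ν) := by
  rw [reInner_eq_sum]
  unfold l1
  rw [Finset.mul_sum, Finset.mul_sum, ← Finset.sum_sub_distrib]
  refine Finset.sum_le_sum fun i _ => ?_
  have h := shrink_scalar (z i) (x' i) ν hν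
  rw [abs_shrink z ν hν i]
  simpa [shrink, Pi.sub_apply] using h

end SHRINK

section REALLEM

lemma le_of_forall_le_add {L M C : ℝ} (hC : 0 ≤ C)
    (h : ∀ t : ℝ, 0 < t → t ≤ 1 → L ≤ M + t * C) : L ≤ M := by
  by_contra hlt
  push_neg at hlt
  rcases eq_or_lt_of_le hC with h0 | h0
  · have := h 1 one_pos le_rfl
    rw [← h0] at this
    linarith
  · have htpos : 0 < min 1 ((L - M)/(2*C)) := lt_min one_pos (div_pos (by linarith) (by linarith))
    have ht := h _ htpos (min_le_left _ _)
    have h1 : min 1 ((L - M)/(2*C)) * C ≤ ((L - M)/(2*C)) * C :=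
      mul_le_mul_of_nonneg_right (min_le_right _ _) h0.le
    have h2 : ((L - M)/(2*C)) * C = (L - M)/2 := by field_simp
    linarith

lemma quad_aux {S T R P : ℝ} (hS : 0 ≤ S) (hT : 0 ≤ T) (hP : 0 ≤ P)
    (hR : -P ≤ R) (hPP : P^2 ≤ S * T) : 0 ≤ S + T + 2 * R := by
  have h1 : P ≤ Real.sqrt (S * T) := by
    have := Real.sqrt_le_sqrt hPP
    rwa [Real.sqrt_sq hP] at this
  have h2 : Real.sqrt (S * T) = Real.sqrt S * Real.sqrt T := Real.sqrt_mul hS _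
  have h3 : 2 * (Real.sqrt S * Real.sqrt T) ≤ S + T := by
    nlinarith [sq_nonneg (Real.sqrt S - Real.sqrt T), Real.sq_sqrt hS, Real.sq_sqrt hT]
  linarith

lemma consts {lam τ γ d η : ℝ} (hτ : 0 < τ) (hγ : 0 < γ) (hlam : 0 ≤ lam)
    (h : τ * lam + γ < 2) (hd : d = 1 - τ * lam / (2 - γ))
    (hη : η = min (d^2) (d * (2 - γ) / (γ * (1 + d)))) :
    0 < d ∧ 0 < η ∧ η ≤ 1 ∧ 0 ≤ 2 - γ - γ * η ∧ τ * lam ≤ (1 - η) * (2 - γ - γ * η) := by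
  have htl : 0 ≤ τ * lam := mul_nonneg hτ.le hlam
  have h2γ : 0 < 2 - γ := by linarith
  have hfrac : τ * lam / (2 - γ) < 1 := (div_lt_one h2γ).mpr (by linarith)
  have hfrac0 : 0 ≤ τ * lam / (2 - γ) := div_nonneg htl h2γ.le
  have hd0 : 0 < d := by rw [hd]; linarith
  have hd1 : d ≤ 1 := by rw [hd]; linarith
  have h1d : 0 < 1 + d := by linarith
  have hη0 : 0 < η := by rw [hη]; exact lt_min (by positivity) (by positivity)
  have hle1 : η ≤ d^2 := hη ▸ min_le_left _ _
  have hle2 : η ≤ d * (2 - γ) / (γ * (1 + d)) := hη ▸ min_le_right _ _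
  have hηle1 : η ≤ 1 := hle1.trans (by nlinarith)
  have hγη : γ * η ≤ d * (2 - γ) / (1 + d) := by
    calc γ * η ≤ γ * (d * (2 - γ) / (γ * (1 + d))) := mul_le_mul_of_nonneg_left hle2 hγ.le
      _ = d * (2 - γ) / (1 + d) := by field_simp
  have hc2 : (2 - γ) / (1 + d) ≤ 2 - γ - γ * η := by
    have heq : (2 - γ) - d * (2 - γ) / (1 + d) = (2 - γ) / (1 + d) := by field_simp; ring
    linarith
  have hc2pos : 0 < (2 - γ) / (1 + d) := by positivity
  have hprod : (1 - d^2) * ((2 - γ) / (1 + d)) ≤ (1 - η) * (2 - γ - γ * η) :=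
    mul_le_mul (by linarith) hc2 hc2pos.le (by linarith)
  have heq1 : (1 - d^2) * ((2 - γ) / (1 + d)) = (1 - d) * (2 - γ) := by field_simp; ring
  have heq2 : (1 - d) * (2 - γ) = τ * lam := by rw [hd]; field_simp; ring
  exact ⟨hd0, hη0, hηle1, by linarith, by linarith⟩

end REALLEM

section VEC

lemma l1_convex {ι : Type*} [Fintype ι] (a b : ι → ℂ) (t : ℝ) (ht0 : 0 ≤ t) (ht1 : t ≤ 1) :
    l1 (a + t • (b - a)) ≤ (1 - t) * l1 a + t * l1 b := by
  unfold l1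
  rw [Finset.mul_sum, Finset.mul_sum, ← Finset.sum_add_distrib]
  refine Finset.sum_le_sum fun i _ => ?_
  have hrw : (a + t • (b - a)) i = ((1 - t : ℝ) : ℂ) * a i + ((t : ℝ) : ℂ) * b i := by
    simp [Pi.smul_apply, Complex.real_smul]
    ring
  rw [hrw]
  calc ‖((1 - t : ℝ) : ℂ) * a i + ((t : ℝ) : ℂ) * b i‖
      ≤ ‖((1 - t : ℝ) : ℂ) * a i‖ + ‖((t : ℝ) : ℂ) * b i‖ :=
        norm_add_le _ _
    _ = (1 - t) * ‖a i‖ + t * ‖b i‖ := by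
        rw [norm_mul, norm_mul, Complex.norm_real, Complex.norm_real, Real.norm_eq_abs, Real.norm_eq_abs,
          abs_of_nonneg (by linarith), abs_of_nonneg ht0]

lemma opt_subgrad {m n : ℕ} (A : Matrix (Fin m) (Fin n) ℂ) (b : Fin m → ℂ) (μ : ℝ) (hμ : 0 < μ)
    (rt : Fin m → ℂ) (xt : Fin n → ℂ) (hfeas : A.mulVec xt + rt = b)
    (hopt : ∀ (x' : Fin n → ℂ) (r' : Fin m → ℂ), A.mulVec x' + r' = b →
      l1 xt + (1/(2*μ)) * l2sq rt ≤ l1 x' + (1/(2*μ)) * l2sq r') :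
    ∀ x' : Fin n → ℂ, l1 xt + reInner ((1/μ) • rt) (A.mulVec (x' - xt)) ≤ l1 x' := by
  intro x'
  set h : Fin n → ℂ := x' - xt with hh
  set Ah : Fin m → ℂ := A.mulVec h with hAh
  set C : ℝ := (1/(2*μ)) * l2sq Ah with hC
  have hC0 : 0 ≤ C := mul_nonneg (by positivity) (l2sq_nonneg _)
  have hri : reInner ((1/μ) • rt) Ah = (1/μ) * reInner rt Ah := reInner_smul_left _ _ _
  refine le_of_forall_le_add (L := l1 xt + reInner ((1/μ) • rt) Ah) (M := l1 x') hC0 ?_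
  intro t ht0 ht1
  have hfe : A.mulVec (xt + t • h) + (rt - t • Ah) = b := by
    rw [Matrix.mulVec_add, Matrix.mulVec_smul, ← hAh, ← hfeas]
    abel
  have hko := hopt (xt + t • h) (rt - t • Ah) hfe
  have hconv : l1 (xt + t • h) ≤ (1 - t) * l1 xt + t * l1 x' := by
    have := l1_convex xt x' t ht0.le ht1
    rwa [← hh] at this
  have hexp : l2sq (rt - t • Ah) = l2sq rt - 2 * t * reInner rt Ah + t^2 * l2sq Ah := by
    have hsub : rt - t • Ah = rt + (-(t • Ah)) := by abel
    rw [hsub, l2sq_add, reInner_neg_right, reInner_smul_right, l2sq_neg, l2sq_smul]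
    ring
  rw [hexp] at hko
  set c : ℝ := 1/(2*μ) with hc
  have h3 : t * l1 xt ≤ t * (l1 x' - 2 * c * reInner rt Ah + c * t * l2sq Ah) := by
    nlinarith [hko, hconv]
  have h4 : l1 xt ≤ l1 x' - 2 * c * reInner rt Ah + c * t * l2sq Ah :=
    le_of_mul_le_mul_left (by linarith) ht0
  have h2c : 2 * c = 1/μ := by rw [hc]; field_simp
  have hCeq : C = c * l2sq Ah := by rw [hC, hc]
  have h5 : 2 * c * reInner rt Ah = (1/μ) * reInner rt Ah := by rw [hc]; field_simp
  rw [hri, hCeq]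
  nlinarith [h4, h5]

lemma hyhat_lemma {m n : ℕ} (A : Matrix (Fin m) (Fin n) ℂ) (b : Fin m → ℂ) (μ β : ℝ)
    (hμ : 0 < μ) (hβ : 0 < β) (yk rk1 : Fin m → ℂ) (xk : Fin n → ℂ)
    (hr : rk1 = (μ * β / (1 + μ * β)) • ((1/β) • yk - (A.mulVec xk - b))) :
    (1/μ) • rk1 = yk - β • (A.mulVec xk + rk1 - b) := by
  have h1 : (0:ℝ) < 1 + μ * β := by positivity
  have hrw : A.mulVec xk + rk1 - b = (A.mulVec xk - b) + rk1 := by abel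
  rw [hrw, hr]
  match_scalars <;> (field_simp; try ring)

end VEC

set_option maxHeartbeats 1000000 in
/-- The key contraction inequality (A.6) in the proof of Theorem 2.1:
‖u^k − ũ‖_G² − ‖u^{k+1} − ũ‖_G² ≥ η ‖u^k − u^{k+1}‖_G². -/
theorem padm_contraction_inequality {m n : ℕ} (A : Matrix (Fin m) (Fin n) ℂ)
    (b : Fin m → ℂ) (μ β τ γ : ℝ) (hμ : 0 < μ) (hβ : 0 < β) (hτ : 0 < τ) (hγ : 0 < γ)
    (hτγ : τ * lmax A + γ < 2)
    (rt : Fin m → ℂ) (xt : Fin n → ℂ)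
    (hfeas : A.mulVec xt + rt = b)
    (hopt : ∀ (x' : Fin n → ℂ) (r' : Fin m → ℂ), A.mulVec x' + r' = b →
      l1 xt + (1/(2*μ)) * l2sq rt ≤ l1 x' + (1/(2*μ)) * l2sq r')
    (x : ℕ → Fin n → ℂ) (r : ℕ → Fin m → ℂ) (y : ℕ → Fin m → ℂ)
    (hr : ∀ k, r (k+1) = (μ * β / (1 + μ * β)) • ((1/β) • y k - (A.mulVec (x k) - b)))
    (hx : ∀ k, x (k+1) =
      shrink (x k - τ • (Aᴴ.mulVec (A.mulVec (x k) + r (k+1) - b - (1/β) • y k))) (τ/β))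
    (hy : ∀ k, y (k+1) = y k - (γ * β) • (A.mulVec (x (k+1)) + r (k+1) - b)) :
    let yt : Fin m → ℂ := (1/μ) • rt
    let Gsq : (Fin n → ℂ) → (Fin m → ℂ) → ℝ := fun u v =>
      (β/τ) * l2sq u + (1/(β*γ)) * l2sq v
    let d : ℝ := 1 - τ * lmax A / (2 - γ)
    let η : ℝ := min (d^2) (d * (2 - γ) / (γ * (1 + d)))
    0 < d ∧ 0 < η ∧
    ∀ k : ℕ,
      η * Gsq (x k - x (k+1)) (y k - y (k+1)) ≤
        Gsq (x k - xt) (y k - yt) - Gsq (x (k+1) - xt) (y (k+1) - yt) := by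
  intro yt Gsq d η
  have hlam := lmax_nonneg A
  obtain ⟨hd0, hη0, hη1, hc2, hKconst⟩ :=
    consts (lam := lmax A) (d := d) (η := η) hτ hγ hlam hτγ rfl rfl
  refine ⟨hd0, hη0, ?_⟩
  intro k
  show η * ((β/τ) * l2sq (x k - x (k+1)) + (1/(β*γ)) * l2sq (y k - y (k+1))) ≤
      ((β/τ) * l2sq (x k - xt) + (1/(β*γ)) * l2sq (y k - (1/μ) • rt)) -
      ((β/τ) * l2sq (x (k+1) - xt) + (1/(β*γ)) * l2sq (y (k+1) - (1/μ) • rt))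
  set v : Fin m → ℂ := A.mulVec (x (k+1)) + r (k+1) - b with hv
  set e : Fin n → ℂ := x k - x (k+1) with he
  set dx : Fin n → ℂ := x (k+1) - xt with hdx
  set Yh : Fin m → ℂ := y k - β • (v + A.mulVec e) with hYh
  have hτβ : (0:ℝ) ≤ τ/β := by positivity
  -- basic vector identities
  have hv1 : A.mulVec (x k) + r (k+1) - b = v + A.mulVec e := by
    rw [hv, he, Matrix.mulVec_sub]; abel
  have hyhat : (1/μ) • r (k+1) = Yh := by
    rw [hYh, ← hv1]
    exact hyhat_lemma A b μ β hμ hβ (y k) (r (k+1)) (x k) (hr k)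
  have hfeasv : A.mulVec dx + (r (k+1) - rt) = v := by
    rw [hdx, hv, Matrix.mulVec_sub, ← hfeas]; abel
  have hyk : y (k+1) = y k - (γ*β) • v := by rw [hy k, hv]
  -- shrink subgradient step
  have harg : A.mulVec (x k) + r (k+1) - b - (1/β) • y k = -((1/β) • Yh) := by
    rw [hv1, hYh]
    match_scalars <;> (field_simp; try ring)
  have hzd : (x k - τ • (Aᴴ.mulVec (A.mulVec (x k) + r (k+1) - b - (1/β) • y k))) - x (k+1)
      = e + (τ/β) • (Aᴴ.mulVec Yh) := by
    rw [harg, Matrix.mulVec_neg, Matrix.mulVec_smul, he]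
    match_scalars <;> (field_simp; try ring)
  have hs0 := shrink_subgrad
    (x k - τ • (Aᴴ.mulVec (A.mulVec (x k) + r (k+1) - b - (1/β) • y k))) xt (τ/β) hτβ
  rw [← hx k, hzd, reInner_add_left, reInner_smul_left, reInner_adj] at hs0
  have hneg : xt - x (k+1) = -dx := by rw [hdx]; abel
  rw [hneg, Matrix.mulVec_neg, reInner_neg_right, reInner_neg_right] at hs0
  -- optimality subgradient step
  have hopt1 := opt_subgrad A b μ hμ rt xt hfeas hopt (x (k+1))
  rw [← hdx] at hopt1
  have hmul : (τ/β) * (l1 xt - l1 (x (k+1))) ≤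
      (τ/β) * (-(reInner ((1/μ) • rt) (A.mulVec dx))) :=
    mul_le_mul_of_nonneg_left (by linarith [hopt1]) hτβ
  have hI1 : 0 ≤ reInner e dx + (τ/β) * reInner Yh (A.mulVec dx)
      - (τ/β) * reInner ((1/μ) • rt) (A.mulVec dx) := by linarith only [hs0, hmul]
  -- r-monotonicity step
  have hYsub : Yh - (1/μ) • rt = (1/μ) • (r (k+1) - rt) := by
    rw [← hyhat, ← smul_sub]
  have hI2 : 0 ≤ reInner Yh (r (k+1) - rt) - reInner ((1/μ) • rt) (r (k+1) - rt) := by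
    have h := reInner_sub_left Yh ((1/μ) • rt) (r (k+1) - rt)
    rw [hYsub, reInner_smul_left, reInner_self] at h
    have h2 : 0 ≤ (1/μ) * l2sq (r (k+1) - rt) :=
      mul_nonneg (by positivity) (l2sq_nonneg _)
    linarith
  have hI2' : 0 ≤ (τ/β) * (reInner Yh (r (k+1) - rt) - reInner ((1/μ) • rt) (r (k+1) - rt)) :=
    mul_nonneg hτβ hI2
  -- combine to KEY inequality
  have hAdd1 : reInner Yh (A.mulVec dx) + reInner Yh (r (k+1) - rt) = reInner Yh v := by
    rw [← reInner_add_right, hfeasv]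
  have hAdd2 : reInner ((1/μ) • rt) (A.mulVec dx) + reInner ((1/μ) • rt) (r (k+1) - rt)
      = reInner ((1/μ) • rt) v := by
    rw [← reInner_add_right, hfeasv]
  have hYhv : reInner Yh v = reInner (y k) v - β * (l2sq v + reInner (A.mulVec e) v) := by
    rw [hYh, reInner_sub_left, reInner_smul_left, reInner_add_left, reInner_self]
  have hcomb : reInner (y k) v - reInner ((1/μ) • rt) v
      - β * l2sq v - β * reInner (A.mulVec e) v
      = (reInner Yh (A.mulVec dx) - reInner ((1/μ) • rt) (A.mulVec dx))
        + (reInner Yh (r (k+1) - rt) - reInner ((1/μ) • rt) (r (k+1) - rt)) := by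
    linear_combination -hYhv - hAdd1 + hAdd2
  have hscal := congrArg (fun z : ℝ => (τ/β) * z) hcomb
  have hKEY : 0 ≤ reInner e dx + (τ/β) * (reInner (y k) v - reInner ((1/μ) • rt) v
      - β * l2sq v - β * reInner (A.mulVec e) v) := by
    linarith only [hI1, hI2', hscal]
  have hpos2 : (0:ℝ) < 2*(β/τ) := by positivity
  have hKEY2 : 0 ≤ 2*(β/τ)*reInner e dx + 2*reInner (y k) v - 2*reInner ((1/μ) • rt) v
      - 2*β*l2sq v - 2*β*reInner (A.mulVec e) v := by
    have h := mul_le_mul_of_nonneg_left hKEY hpos2.le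
    rw [mul_zero] at h
    have heqK : 2*(β/τ) * (reInner e dx + (τ/β) * (reInner (y k) v - reInner ((1/μ) • rt) v
        - β * l2sq v - β * reInner (A.mulVec e) v))
        = 2*(β/τ)*reInner e dx + 2*reInner (y k) v - 2*reInner ((1/μ) • rt) v
          - 2*β*l2sq v - 2*β*reInner (A.mulVec e) v := by
      field_simp
      ring
    rw [heqK] at h
    exact h
  -- quadratic bound
  have hR : -(β*(Real.sqrt (l2sq (A.mulVec e)) * Real.sqrt (l2sq v)))
      ≤ β * reInner (A.mulVec e) v := by
    have hcs := neg_sqrt_le_reInner (A.mulVec e) v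
    have := mul_le_mul_of_nonneg_left hcs hβ.le
    linarith only [this]
  have hPP : (β*(Real.sqrt (l2sq (A.mulVec e)) * Real.sqrt (l2sq v)))^2
      ≤ ((1-η)*((β/τ)*l2sq e)) * ((2-γ-γ*η)*(β*l2sq v)) := by
    have e1 : (β*(Real.sqrt (l2sq (A.mulVec e)) * Real.sqrt (l2sq v)))^2
        = β^2*(l2sq (A.mulVec e) * l2sq v) := by
      rw [mul_pow, mul_pow, Real.sq_sqrt (l2sq_nonneg _), Real.sq_sqrt (l2sq_nonneg _)]
    have e2 := l2sq_mulVec_le A e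
    have e3 : β^2*(l2sq (A.mulVec e) * l2sq v) ≤ β^2*((lmax A * l2sq e) * l2sq v) := by
      have h := mul_le_mul_of_nonneg_left (mul_le_mul_of_nonneg_right e2 (l2sq_nonneg v))
        (sq_nonneg β)
      linarith only [h]
    have e4 : τ*(lmax A)*((β^2/τ)*(l2sq e * l2sq v)) = β^2*((lmax A * l2sq e) * l2sq v) := by
      field_simp
    have e5 : ((1-η)*(2-γ-γ*η))*((β^2/τ)*(l2sq e * l2sq v))
        = ((1-η)*((β/τ)*l2sq e)) * ((2-γ-γ*η)*(β*l2sq v)) := by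
      field_simp
    have e6 : (0:ℝ) ≤ (β^2/τ)*(l2sq e * l2sq v) :=
      mul_nonneg (by positivity) (mul_nonneg (l2sq_nonneg _) (l2sq_nonneg _))
    have e7 := mul_le_mul_of_nonneg_right hKconst e6
    linarith only [e1, e3, e4, e5, e7]
  have hQ := quad_aux
    (mul_nonneg (by linarith) (mul_nonneg (by positivity) (l2sq_nonneg e)))
    (mul_nonneg hc2 (mul_nonneg hβ.le (l2sq_nonneg v)))
    (by positivity)
    hR hPP
  -- expansion of the G-norm differences
  have hxsplit : x k - xt = e + dx := by rw [he, hdx]; abel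
  have hyd1 : y (k+1) - (1/μ) • rt = (y k - (1/μ) • rt) + (-((γ*β) • v)) := by
    rw [hyk]; abel
  have hyd2 : y k - y (k+1) = (γ*β) • v := by rw [hyk]; abel
  have hΔeq : ((β/τ) * l2sq (x k - xt) + (1/(β*γ)) * l2sq (y k - (1/μ) • rt)) -
      ((β/τ) * l2sq dx + (1/(β*γ)) * l2sq (y (k+1) - (1/μ) • rt))
      = (β/τ)*l2sq e + 2*(β/τ)*reInner e dx
        + 2*(reInner (y k) v - reInner ((1/μ) • rt) v) - γ*β*l2sq v := by
    rw [hxsplit, l2sq_add, hyd1, l2sq_add,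
      reInner_neg_right (y k - (1/μ) • rt) ((γ*β) • v),
      reInner_smul_right (γ*β) (y k - (1/μ) • rt) v,
      l2sq_neg, l2sq_smul, reInner_sub_left (y k) ((1/μ) • rt) v]
    field_simp
    ring
  have hLeq : η * ((β/τ) * l2sq e + (1/(β*γ)) * l2sq (y k - y (k+1)))
      = η*((β/τ)*l2sq e) + η*((γ*β)*l2sq v) := by
    rw [hyd2, l2sq_smul]
    field_simp
  rw [hLeq, hΔeq]
  linarith only [hKEY2, hQ]
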